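/- For every connected graph G on n ≥ 3 vertices, the remoteness is at most the average eccentricity: ρ(G) ≤ ecc(G), with equality if and only if G is the complete graph K_n. -/

import Mathlib

open SimpleGraph Finset

/-- The transmission of a vertex: the sum of distances from `v` to all other vertices. -/
noncomputable def transmission {n : ℕ} (G : SimpleGraph (Fin n)) (v : Fin n) : ℕ :=
  ∑ u, G.dist v u

/-- The proximity: the minimum average distance from a vertex to all others. -/
noncomputable def proximity {n : ℕ} (G : SimpleGraph (Fin n)) : ℝ :=
  sInf {x : ℝ | ∃ v : Fin n, x = transmission G v} / (n - 1)

/-- The remoteness: the maximum average distance from a vertex to all others. -/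
noncomputable def remoteness {n : ℕ} (G : SimpleGraph (Fin n)) : ℝ :=
  sSup {x : ℝ | ∃ v : Fin n, x = transmission G v} / (n - 1)

/-- The eccentricity of a vertex: the maximum distance from `v` to another vertex. -/
noncomputable def eccentricity {n : ℕ} (G : SimpleGraph (Fin n)) (v : Fin n) : ℕ :=
  Finset.univ.sup fun u => G.dist v u

/-- The average eccentricity of a graph. -/
noncomputable def avgEcc {n : ℕ} (G : SimpleGraph (Fin n)) : ℝ :=
  (∑ v, (eccentricity G v : ℝ)) / n

theorem remoteness_le_avgEcc {n : ℕ} (hn : 3 ≤ n) (G : SimpleGraph (Fin n))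
    (hG : G.Connected) :
    remoteness G ≤ avgEcc G ∧ (remoteness G = avgEcc G ↔ G = ⊤) := by
  have hn0 : 0 < n := by omega
  have hn1 : 1 ≤ n := by omega
  have hnR : (0:ℝ) < n := by exact_mod_cast hn0
  have hn1R : (0:ℝ) < (n:ℝ) - 1 := by
    have : (1:ℝ) < n := by exact_mod_cast (by omega : 1 < n)
    linarith
  have hcast : ((n - 1 : ℕ) : ℝ) = (n:ℝ) - 1 := by
    push_cast [Nat.cast_sub hn1]; ring
  haveI : Nonempty (Fin n) := ⟨⟨0, hn0⟩⟩
  -- maximizing vertex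
  obtain ⟨v₀, -, hmax⟩ := Finset.exists_max_image (univ : Finset (Fin n))
    (transmission G) univ_nonempty
  -- remoteness formula
  have hsup : sSup {x : ℝ | ∃ v : Fin n, x = transmission G v}
      = (transmission G v₀ : ℝ) := by
    apply le_antisymm
    · refine csSup_le ⟨(transmission G v₀ : ℝ), v₀, rfl⟩ ?_
      rintro x ⟨v, rfl⟩
      exact_mod_cast hmax v (mem_univ v)
    · apply le_csSup
      · refine ⟨(transmission G v₀ : ℝ), ?_⟩
        rintro x ⟨v, rfl⟩
        exact_mod_cast hmax v (mem_univ v)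
      · exact ⟨v₀, rfl⟩
  have hrem : remoteness G = (transmission G v₀ : ℝ) / ((n:ℝ) - 1) := by
    rw [remoteness, hsup]
  -- basic distance facts
  have hE : ∀ u, G.dist v₀ u ≤ eccentricity G u := by
    intro u
    rw [SimpleGraph.dist_comm]
    exact Finset.le_sup (mem_univ v₀)
  have hEv : ∀ u, G.dist v₀ u ≤ eccentricity G v₀ := fun u =>
    Finset.le_sup (mem_univ u)
  set E := (univ : Finset (Fin n)).erase v₀ with hEdef
  have hcardE : E.card = n - 1 := by
    rw [hEdef, card_erase_of_mem (mem_univ v₀), card_univ, Fintype.card_fin]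
  have htrans : transmission G v₀ = ∑ u ∈ E, G.dist v₀ u := by
    rw [transmission, ← Finset.add_sum_erase _ _ (mem_univ v₀),
      SimpleGraph.dist_self, zero_add]
  have hsumE : ∑ u, eccentricity G u = eccentricity G v₀ + ∑ u ∈ E, eccentricity G u := by
    rw [← Finset.add_sum_erase _ _ (mem_univ v₀)]
  set Sm := ∑ u ∈ E, min (eccentricity G v₀) (eccentricity G u) with hSmdef
  have hts : transmission G v₀ ≤ Sm := by
    rw [htrans, hSmdef]
    exact Finset.sum_le_sum fun u _ => le_min (hEv u) (hE u)
  have hS1 : Sm ≤ (n - 1) * eccentricity G v₀ := by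
    rw [hSmdef, ← hcardE]
    calc ∑ u ∈ E, min (eccentricity G v₀) (eccentricity G u)
        ≤ ∑ _u ∈ E, eccentricity G v₀ :=
          Finset.sum_le_sum fun u _ => min_le_left _ _
      _ = E.card * eccentricity G v₀ := by rw [Finset.sum_const, smul_eq_mul]
  have hS2 : Sm + eccentricity G v₀ ≤ ∑ u, eccentricity G u := by
    rw [hsumE, add_comm]
    exact add_le_add_right (Finset.sum_le_sum fun u _ => min_le_right _ _) _
  have hmul : ∀ k : ℕ, n * k = (n - 1) * k + k := by
    intro k
    cases n with
    | zero => omega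
    | succ m => simp [Nat.succ_sub_one, Nat.succ_mul]
  have key : n * transmission G v₀ ≤ (n - 1) * ∑ u, eccentricity G u := by
    calc n * transmission G v₀ ≤ n * Sm := Nat.mul_le_mul_left _ hts
      _ = (n - 1) * Sm + Sm := hmul Sm
      _ ≤ (n - 1) * Sm + (n - 1) * eccentricity G v₀ := by
          exact add_le_add_right hS1 _
      _ = (n - 1) * (Sm + eccentricity G v₀) := by ring
      _ ≤ (n - 1) * ∑ u, eccentricity G u := Nat.mul_le_mul_left _ hS2
  -- the main inequality over ℝ
  have hineq : remoteness G ≤ avgEcc G := by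
    rw [hrem, avgEcc, div_le_div_iff₀ hn1R hnR]
    have : (n : ℝ) * (transmission G v₀ : ℝ) ≤ ((n:ℝ) - 1) * ∑ u, (eccentricity G u : ℝ) := by
      rw [← hcast]
      push_cast
      exact_mod_cast key
    push_cast at this ⊢
    linarith
  refine ⟨hineq, ?_, ?_⟩
  · -- equality → complete
    intro heq
    rw [hrem, avgEcc] at heq
    have hkeyeq : n * transmission G v₀ = (n - 1) * ∑ u, eccentricity G u := by
      have h2 : (transmission G v₀ : ℝ) * n = (∑ u, (eccentricity G u : ℝ)) * ((n:ℝ) - 1) :=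
        (div_eq_div_iff hn1R.ne' hnR.ne').mp heq
      have : ((n * transmission G v₀ : ℕ) : ℝ) = (((n - 1) * ∑ u, eccentricity G u : ℕ) : ℝ) := by
        push_cast [Nat.cast_sub hn1]
        linarith
      exact_mod_cast this
    -- each step in the chain is an equality
    have c1 : n * transmission G v₀ ≤ n * Sm := Nat.mul_le_mul_left _ hts
    have c2 : n * Sm ≤ (n - 1) * (Sm + eccentricity G v₀) := by
      rw [hmul Sm, Nat.mul_add]
      exact add_le_add_right hS1 _
    have c3 : (n - 1) * (Sm + eccentricity G v₀) ≤ (n - 1) * ∑ u, eccentricity G u :=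
      Nat.mul_le_mul_left _ hS2
    have e1 : transmission G v₀ = Sm :=
      Nat.eq_of_mul_eq_mul_left hn0
        (le_antisymm c1 (by omega))
    have e2 : Sm + eccentricity G v₀ = ∑ u, eccentricity G u := by
      have hne : 0 < n - 1 := by omega
      exact Nat.eq_of_mul_eq_mul_left hne (le_antisymm (by omega) (by omega))
    have e3 : Sm = (n - 1) * eccentricity G v₀ := by
      have : n * Sm = (n - 1) * (Sm + eccentricity G v₀) := by omega
      have h4 : (n - 1) * Sm + Sm = (n - 1) * Sm + (n - 1) * eccentricity G v₀ := by
        rw [← hmul Sm, this, Nat.mul_add]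
      omega
    -- pointwise equalities
    have hdist_eq : ∀ u ∈ E, G.dist v₀ u = min (eccentricity G v₀) (eccentricity G u) := by
      have := (Finset.sum_eq_sum_iff_of_le
        (fun u (_ : u ∈ E) => le_min (hEv u) (hE u))).mp (by rw [← htrans, ← hSmdef, e1])
      intro u hu; exact this u hu
    have hmin_eq_v : ∀ u ∈ E, min (eccentricity G v₀) (eccentricity G u) = eccentricity G v₀ := by
      have hsum : ∑ u ∈ E, min (eccentricity G v₀) (eccentricity G u)
          = ∑ _u ∈ E, eccentricity G v₀ := by
        rw [← hSmdef, e3, Finset.sum_const, smul_eq_mul, hcardE]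
      have := (Finset.sum_eq_sum_iff_of_le
        (fun u (_ : u ∈ E) => min_le_left (eccentricity G v₀) (eccentricity G u))).mp hsum
      intro u hu; exact this u hu
    have hmin_eq_u : ∀ u ∈ E, min (eccentricity G v₀) (eccentricity G u) = eccentricity G u := by
      have hsum : ∑ u ∈ E, min (eccentricity G v₀) (eccentricity G u)
          = ∑ u ∈ E, eccentricity G u := by omega
      have := (Finset.sum_eq_sum_iff_of_le
        (fun u (_ : u ∈ E) => min_le_right (eccentricity G v₀) (eccentricity G u))).mp hsum
      intro u hu; exact this u hu
    -- distances from v₀ are all equal to ecc v₀, and all eccentricities equal ecc v₀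
    have hdv : ∀ u ∈ E, G.dist v₀ u = eccentricity G v₀ := fun u hu => by
      rw [hdist_eq u hu, hmin_eq_v u hu]
    have hecc_all : ∀ u ∈ E, eccentricity G u = eccentricity G v₀ := fun u hu => by
      rw [← hmin_eq_u u hu, hmin_eq_v u hu]
    -- show ecc v₀ = 1 by finding a neighbor of v₀
    have hne_ex : ∃ u : Fin n, u ≠ v₀ := by
      by_contra h
      push_neg at h
      have : Fintype.card (Fin n) ≤ 1 := Fintype.card_le_one_iff.mpr (fun a b => by
        rw [h a, h b])
      simp at this; omega
    obtain ⟨u, hu⟩ := hne_ex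
    have hdpos : 0 < G.dist v₀ u := hG.pos_dist_of_ne (Ne.symm hu)
    obtain ⟨p, hp⟩ := SimpleGraph.exists_walk_of_dist_ne_zero (Nat.pos_iff_ne_zero.mp hdpos)
    have hecc1 : eccentricity G v₀ = 1 := by
      cases p with
      | nil => simp at hp; omega
      | cons hadj q =>
        rename_i w
        have hwne : w ≠ v₀ := hadj.ne'
        have : G.dist v₀ w = 1 := SimpleGraph.dist_eq_one_iff_adj.mpr hadj
        have := hdv w (Finset.mem_erase.mpr ⟨hwne, mem_univ w⟩)
        omega
    -- all eccentricities are 1 → complete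
    have hecc_one : ∀ u : Fin n, eccentricity G u = 1 := by
      intro w
      by_cases hw : w = v₀
      · rw [hw, hecc1]
      · rw [hecc_all w (Finset.mem_erase.mpr ⟨hw, mem_univ w⟩), hecc1]
    ext a b
    simp only [top_adj]
    constructor
    · exact fun h => h.ne
    · intro hab
      have h1 : G.dist a b ≤ 1 := by
        rw [← hecc_one a]
        exact Finset.le_sup (mem_univ b)
      have h2 : 0 < G.dist a b := hG.pos_dist_of_ne hab
      exact SimpleGraph.dist_eq_one_iff_adj.mp (by omega)
  · -- complete → equality
    intro hG'
    subst hG'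
    have hdist : ∀ a b : Fin n, a ≠ b → (⊤ : SimpleGraph (Fin n)).dist a b = 1 := by
      intro a b hab
      exact SimpleGraph.dist_eq_one_iff_adj.mpr hab
    have htr : ∀ v : Fin n, transmission (⊤ : SimpleGraph (Fin n)) v = n - 1 := by
      intro v
      rw [transmission, ← Finset.add_sum_erase _ _ (mem_univ v), SimpleGraph.dist_self,
        zero_add]
      rw [Finset.sum_congr rfl (fun u hu => hdist v u (Ne.symm (Finset.mem_erase.mp hu).1))]
      simp [card_erase_of_mem, card_univ]
    have hecc : ∀ v : Fin n, eccentricity (⊤ : SimpleGraph (Fin n)) v = 1 := by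
      intro v
      apply le_antisymm
      · apply Finset.sup_le
        intro u _
        show (⊤ : SimpleGraph (Fin n)).dist v u ≤ 1
        by_cases h : u = v
        · subst h
          rw [SimpleGraph.dist_self]
          omega
        · rw [hdist v u (Ne.symm h)]
      · obtain ⟨u, hu⟩ : ∃ u : Fin n, u ≠ v := by
          by_contra h
          push_neg at h
          have h0 := h ⟨0, by omega⟩
          have h1 := h ⟨1, by omega⟩
          rw [← h1] at h0
          simp [Fin.ext_iff] at h0
        calc 1 = (⊤ : SimpleGraph (Fin n)).dist v u := (hdist v u (Ne.symm hu)).symm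
          _ ≤ _ := Finset.le_sup (mem_univ u)
    rw [hrem, avgEcc, htr v₀]
    simp only [hecc]
    rw [hcast]
    push_cast
    rw [Finset.sum_const, card_univ, Fintype.card_fin]
    field_simp
    simp
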